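/- Let G be a finite group for which every complex irreducible representation of G occurs in the conjugation representation ℂG. Then the Killing form K(x_a, x_b) = |Z(ab) ∩ (G \ {e})| on ℂ.(G \ {e}) is nondegenerate. -/

import Mathlib

open CategoryTheory

/-- The conjugation representation of a finite group `G` on `ℂG`
(realised as functions `G → ℂ`). -/
def conjRep (G : Type) [Group G] : Representation ℂ G (G → ℂ) where
  toFun g :=
    { toFun := fun f x => f (g⁻¹ * x * g)
      map_add' := fun _ _ => rfl
      map_smul' := fun _ _ => rfl }
  map_one' := by
    ext f x
    simp
  map_mul' g h := by
    ext f x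
    simp [mul_assoc]

namespace RothKillingAux

open Matrix

noncomputable section

/-! ### Generic subrepresentation machinery -/

section Generic

variable {k : Type} [Field k] {G : Type} [Monoid G]

/-- Restriction of a representation to an invariant subspace. -/
def subrep (Y : FDRep k G) (U : Submodule k Y) (hU : ∀ g : G, ∀ u ∈ U, Y.ρ g u ∈ U) :
    Representation k G U where
  toFun g := (Y.ρ g).restrict (hU g)
  map_one' := by ext u; simp [LinearMap.restrict_apply]
  map_mul' g h := by ext u; simp [LinearMap.restrict_apply]

/-- The inclusion of an invariant subspace, as a morphism of representations. -/
def subrepIncl (Y : FDRep k G) (U : Submodule k Y) (hU : ∀ g : G, ∀ u ∈ U, Y.ρ g u ∈ U) :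
    FDRep.of (subrep Y U hU) ⟶ Y where
  hom := FGModuleCat.ofHom U.subtype
  comm g := by ext u; rfl

lemma hom_comm_apply' {A B : FDRep k G} (f : A ⟶ B) (g : G) (x : A) :
    f.hom.hom.hom (A.ρ g x) = B.ρ g (f.hom.hom.hom x) :=
  congrFun (congrArg (fun f => DFunLike.coe f.hom.hom) (f.comm g)) x

lemma mono_injective {Y Z : FDRep k G} (f : Y ⟶ Z) [Mono f] :
    Function.Injective f.hom.hom.hom := by
  have hU : ∀ g : G, ∀ u ∈ LinearMap.ker f.hom.hom.hom, Y.ρ g u ∈ LinearMap.ker f.hom.hom.hom := by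
    intro g u hu
    simp only [LinearMap.mem_ker] at hu ⊢
    exact (hom_comm_apply' f g u).trans (by rw [hu, map_zero])
  set K := LinearMap.ker f.hom.hom.hom with hK
  have hcomp : subrepIncl Y K hU ≫ f = 0 := by
    ext u
    exact u.2
  have h0 : subrepIncl Y K hU = 0 := by
    rw [← cancel_mono f, hcomp, Limits.zero_comp]
  rw [← LinearMap.ker_eq_bot, ← hK]
  ext u
  simp only [Submodule.mem_bot]
  refine ⟨fun hu => ?_, fun hu => by simp [hu]⟩
  have := congrArg (fun φ => φ.hom.hom.hom (⟨u, hu⟩ : K)) h0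
  exact this

end Generic

/-! ### The simple modules of the group algebra as `FDRep`s -/

variable {G : Type} [Group G] [Fintype G] [DecidableEq G]

local notation "R" => MonoidAlgebra ℂ G

instance : FiniteDimensional ℂ R :=
  Module.Finite.equiv ((Finsupp.linearEquivFunOnFinite ℂ ℂ G).symm.trans
    (MonoidAlgebra.coeffLinearEquiv ℂ).symm)

instance (S : Submodule R R) : FiniteDimensional ℂ S :=
  inferInstanceAs (FiniteDimensional ℂ (S.restrictScalars ℂ))

/-- The representation of `G` on a submodule of the group algebra. -/
def sRep (S : Submodule R R) : Representation ℂ G S where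
  toFun g :=
    { toFun := fun s => (MonoidAlgebra.of ℂ G g : R) • s
      map_add' := fun s t => smul_add _ s t
      map_smul' := fun c s => (smul_comm c (MonoidAlgebra.of ℂ G g : R) s).symm }
  map_one' := by ext s; simp
  map_mul' g h := by ext s; simp [mul_smul, mul_assoc]

/-- An invariant subspace of a `MonoidAlgebra`-submodule is a submodule. -/
def invSub (S : Submodule R R) (U : Submodule ℂ S)
    (hU : ∀ g : G, ∀ u ∈ U, (MonoidAlgebra.of ℂ G g : R) • u ∈ U) : Submodule R S where
  carrier := U
  add_mem' := U.add_mem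
  zero_mem' := U.zero_mem
  smul_mem' := by
    intro x s hs
    simp only [SetLike.mem_coe] at hs ⊢
    induction x using MonoidAlgebra.induction_linear with
    | zero => simp only [zero_smul]; exact U.zero_mem
    | add a b ha hb => rw [add_smul]; exact U.add_mem ha hb
    | single a c =>
        have h1 : (MonoidAlgebra.single a c : R) = c • (MonoidAlgebra.of ℂ G a : R) := by
          rw [MonoidAlgebra.of_apply, MonoidAlgebra.smul_single, smul_eq_mul, mul_one]
        rw [h1, smul_assoc]
        exact U.smul_mem c (hU a s hs)

lemma eq_bot_or_top (S : Submodule R R) (hS : IsSimpleModule R S) (U : Submodule ℂ S)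
    (hU : ∀ g : G, ∀ u ∈ U, (MonoidAlgebra.of ℂ G g : R) • u ∈ U) : U = ⊥ ∨ U = ⊤ := by
  rcases hS.toIsSimpleOrder.eq_bot_or_eq_top (invSub S U hU) with h | h
  · left
    rw [eq_bot_iff]
    intro u hu
    have : u ∈ invSub S U hU := hu
    rw [h] at this
    simpa using this
  · right
    rw [eq_top_iff]
    intro u _
    have : u ∈ invSub S U hU := by rw [h]; trivial
    exact this

lemma simple_sRep (S : Submodule R R) (hS : IsSimpleModule R S) :
    Simple (FDRep.of (sRep S)) := by
  have hnt : Nontrivial S := IsSimpleModule.nontrivial R S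
  constructor
  intro Y f hmono
  constructor
  · intro hiso h0
    obtain ⟨s, hs⟩ := exists_ne (0 : S)
    apply hs
    have h1 : inv f ≫ f = 𝟙 (FDRep.of (sRep S)) := by simp
    have h2 := congrArg Action.Hom.hom h1
    rw [Action.comp_hom, Action.id_hom] at h2
    have h3 : f.hom = 0 := by rw [h0]; rfl
    have h4 : f.hom.hom.hom ((inv f).hom.hom.hom s) = s :=
      congrFun (congrArg (fun φ => DFunLike.coe φ.hom.hom) h2) s
    rw [h3] at h4
    simpa using h4.symm
  · intro hne
    have hinj : Function.Injective f.hom := mono_injective f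
    let F : Y →ₗ[ℂ] S := f.hom.hom.hom
    have hFf : ∀ y, F y = f.hom y := fun _ => rfl
    have hU : ∀ g : G, ∀ u ∈ LinearMap.range F,
        (MonoidAlgebra.of ℂ G g : R) • u ∈ LinearMap.range F := by
      rintro g u ⟨y, rfl⟩
      exact ⟨Y.ρ g y, hom_comm_apply' f g y⟩
    rcases eq_bot_or_top S hS _ hU with h | h
    · exfalso
      apply hne
      have hF : F = 0 := LinearMap.range_eq_bot.mp h
      ext y : 3
      change F y = 0
      simp [hF]
    · have hsurj : Function.Surjective F := LinearMap.range_eq_top.mp h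
      let e := LinearEquiv.ofBijective F ⟨hinj, hsurj⟩
      refine ⟨⟨⟨FGModuleCat.ofHom e.symm.toLinearMap, ?_⟩, ?_, ?_⟩⟩
      · intro g
        ext s
        apply hinj
        change F (e.symm ((sRep S) g s)) = f.hom.hom.hom (Y.ρ g (e.symm s))
        rw [hom_comm_apply' f g (e.symm s)]
        rw [show F (e.symm ((sRep S) g s)) = (sRep S) g s from e.apply_symm_apply _]
        change _ = (sRep S) g (F (e.symm s))
        rw [show F (e.symm s) = s from e.apply_symm_apply s]
      · ext y
        change e.symm (F y) = y
        exact e.symm_apply_apply y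
      · ext s : 3
        change F (e.symm s) = s
        exact e.apply_symm_apply s


lemma killing (hRoth : ∀ V : FDRep ℂ G, Simple V → ∃ f : V ⟶ FDRep.of (conjRep G), f ≠ 0)
    (c : G → ℂ)
    (hI : ∀ x y : G, (∑ a : G, c a * (if y = a⁻¹ * x * a then 1 else 0)) = 0) :
    ∀ b : G, c b = 0 := by
  haveI : NeZero ((Fintype.card G : ℂ)) := ⟨by exact_mod_cast Fintype.card_ne_zero⟩
  have hT : ∀ (fn : G → ℂ) (x : G), (∑ a : G, c a * fn (a⁻¹ * x * a)) = 0 := by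
    intro fn x
    have h1 : ∀ a : G, c a * fn (a⁻¹ * x * a)
        = ∑ y : G, (c a * (if y = a⁻¹ * x * a then 1 else 0)) * fn y := by
      intro a
      have h2 : ∀ y : G, (c a * (if y = a⁻¹ * x * a then 1 else 0)) * fn y
          = c a * (if y = a⁻¹ * x * a then fn y else 0) := by
        intro y; by_cases h : y = a⁻¹ * x * a <;> simp [h]
      rw [Finset.sum_congr rfl fun y _ => h2 y, ← Finset.mul_sum,
        Finset.sum_ite_eq' Finset.univ (a⁻¹ * x * a) fn]
      simp
    calc (∑ a : G, c a * fn (a⁻¹ * x * a))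
        = ∑ a : G, ∑ y : G, (c a * (if y = a⁻¹ * x * a then 1 else 0)) * fn y := by
          exact Finset.sum_congr rfl fun a _ => h1 a
      _ = ∑ y : G, (∑ a : G, c a * (if y = a⁻¹ * x * a then 1 else 0)) * fn y := by
          rw [Finset.sum_comm]
          exact Finset.sum_congr rfl fun y _ => (Finset.sum_mul _ _ _).symm
      _ = 0 := by
          refine Finset.sum_eq_zero fun y _ => ?_
          rw [hI x y, zero_mul]
  have key : ∀ S : Submodule R R, IsSimpleModule R S → ∀ s : S,
      (∑ a : G, c a • (MonoidAlgebra.of ℂ G a : R)) * (s : R) = 0 := by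
    intro S hS s
    haveI := simple_sRep S hS
    obtain ⟨f, hf⟩ := hRoth (FDRep.of (sRep S)) this
    let φ : S →ₗ[ℂ] (G → ℂ) := f.hom.hom.hom
    have hK : ∀ g : G, ∀ u ∈ LinearMap.ker φ,
        (MonoidAlgebra.of ℂ G g : R) • u ∈ LinearMap.ker φ := by
      intro g u hu
      rw [LinearMap.mem_ker] at hu ⊢
      have h2 : φ ((MonoidAlgebra.of ℂ G g : R) • u) = conjRep G g (φ u) :=
        hom_comm_apply' f g u
      rw [h2, hu, map_zero]
    have hinj : Function.Injective φ := by
      rw [← LinearMap.ker_eq_bot]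
      rcases eq_bot_or_top S hS _ hK with h | h
      · exact h
      · exfalso
        apply hf
        have hφ : φ = 0 := LinearMap.ker_eq_top.mp h
        ext y : 3
        change φ y = 0
        rw [hφ]; rfl
    have h5 : (∑ a : G, c a • ((sRep S) a s)) = 0 := by
      apply hinj
      rw [map_sum, map_zero]
      have h6 : ∀ a : G, φ (c a • (sRep S) a s) = c a • conjRep G a (φ s) := by
        intro a
        rw [_root_.map_smul]
        congr 1
        exact hom_comm_apply' f a s
      rw [Finset.sum_congr rfl fun a _ => h6 a]
      funext z
      rw [Finset.sum_apply]
      have h7 : ∀ a : G, (c a • conjRep G a (φ s)) z = c a * (φ s) (a⁻¹ * z * a) := by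
        intro a; rfl
      rw [Finset.sum_congr rfl fun a _ => h7 a]
      exact hT (φ s) z
    have h8 := congrArg (fun t : S => (t : R)) h5
    simp only [AddSubmonoidClass.coe_finset_sum, Submodule.coe_smul_of_tower] at h8
    have h9 : ∀ a : G, (((sRep S) a s : S) : R) = (MonoidAlgebra.of ℂ G a : R) * (s : R) := by
      intro a; rfl
    rw [Finset.sum_mul]
    rw [Finset.sum_congr rfl fun a (_ : a ∈ Finset.univ) =>
      (smul_mul_assoc (c a) (MonoidAlgebra.of ℂ G a : R) (s : R))]
    rw [Finset.sum_congr rfl fun a (_ : a ∈ Finset.univ) => by rw [h9 a]] at h8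
    simpa using h8
  have hall : ∀ r : R, (∑ a : G, c a • (MonoidAlgebra.of ℂ G a : R)) * r = 0 := by
    intro r
    have hr : r ∈ (⊤ : Submodule R R) := trivial
    rw [← IsSemisimpleModule.sSup_simples_eq_top R R, sSup_eq_iSup'] at hr
    exact Submodule.iSup_induction (motive := fun y : R =>
        (∑ a : G, c a • (MonoidAlgebra.of ℂ G a : R)) * y = 0) _ hr
      (fun i y hy => key i.1 i.2 ⟨y, hy⟩) (mul_zero _)
      (fun y z hy hz => show _ * (y + z) = 0 by
        rw [mul_add]
        rw [show (∑ a : G, c a • (MonoidAlgebra.of ℂ G a : R)) * y = 0 from hy,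
          show (∑ a : G, c a • (MonoidAlgebra.of ℂ G a : R)) * z = 0 from hz, add_zero])
  have hx0 : (∑ a : G, c a • (MonoidAlgebra.of ℂ G a : R)) = 0 := by
    have := hall 1; rwa [mul_one] at this
  intro b
  have hb := congrArg (fun z : R => z.coeff b) hx0
  have hb2 : ∀ a : G, ((c a • (MonoidAlgebra.of ℂ G a : R)) : R).coeff b
      = if a = b then c a else 0 := by
    intro a
    rw [MonoidAlgebra.of_apply]
    change c a • ((Finsupp.single a 1 : G →₀ ℂ) b) = _
    rw [Finsupp.single_apply]
    by_cases h : a = b <;> simp [h]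
  rw [show (∑ a : G, c a • (MonoidAlgebra.of ℂ G a : R)).coeff b
      = ∑ a : G, ((c a • (MonoidAlgebra.of ℂ G a : R)) : R).coeff b
    by rw [MonoidAlgebra.coeff_sum, Finsupp.finset_sum_apply]] at hb
  rw [Finset.sum_congr rfl fun a _ => hb2 a, Finset.sum_ite_eq' Finset.univ b c] at hb
  simpa using hb

/-- membership manipulation -/
lemma comm_iff (a b x : G) :
    a⁻¹ * x * a = b * x * b⁻¹ ↔ x * (a * b) = a * b * x := by
  constructor
  · intro h
    simpa [mul_assoc] using congrArg (fun z => a * z * b) h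
  · intro h
    simpa [mul_assoc] using congrArg (fun z => a⁻¹ * z * b⁻¹) h

variable (G) in
/-- The vectors: row `none` is the constant `1/|G|`, row `some a` is the matrix
of conjugation by `a` (vectorised). -/
def Xm : Matrix (Option {x : G // x ≠ 1}) (G × G) ℝ :=
  Matrix.of fun i p =>
    i.elim ((Fintype.card G : ℝ))⁻¹ (fun a => if p.2 = (a : G)⁻¹ * p.1 * a then 1 else 0)

def invC : {x : G // x ≠ 1} ≃ {x : G // x ≠ 1} where
  toFun a := ⟨(a : G)⁻¹, fun h => a.2 (by rwa [inv_eq_one] at h)⟩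
  invFun a := ⟨(a : G)⁻¹, fun h => a.2 (by rwa [inv_eq_one] at h)⟩
  left_inv a := by simp
  right_inv a := by simp

lemma sum_indicator_eq (t : G) : (∑ y : G, (if y = t then (1:ℝ) else 0)) = 1 := by
  rw [Finset.sum_ite_eq' Finset.univ t (fun _ => (1:ℝ))]
  simp

lemma entry_some_some (a b : {x : G // x ≠ 1}) :
    (Xm G * (Xm G)ᵀ) (some a) (some (invC b)) =
      ((Finset.univ.filter fun h : G =>
        h * ((a : G) * b) = ((a : G) * b) * h).card : ℝ) := by
  rw [Matrix.mul_apply]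
  have h1 : ∀ p : G × G, Xm G (some a) p * (Xm G)ᵀ p (some (invC b))
      = if p.2 = (a:G)⁻¹ * p.1 * a then (if (a:G)⁻¹ * p.1 * a = (b:G) * p.1 * (b:G)⁻¹
          then (1:ℝ) else 0) else 0 := by
    rintro ⟨x, y⟩
    simp only [Matrix.transpose_apply, Xm, Matrix.of_apply, Option.elim, invC]
    by_cases h : y = (a:G)⁻¹ * x * a <;> by_cases h' : y = ((b:G)⁻¹)⁻¹ * x * (b:G)⁻¹ <;>
      simp_all [inv_inv]
  rw [Finset.sum_congr rfl fun p _ => h1 p]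
  rw [Fintype.sum_prod_type]
  have h2 : ∀ x : G, (∑ y : G, if y = (a:G)⁻¹ * x * a then
      (if (a:G)⁻¹ * x * a = (b:G) * x * (b:G)⁻¹ then (1:ℝ) else 0) else 0)
      = (if x * ((a:G) * b) = ((a:G) * b) * x then (1:ℝ) else 0) := by
    intro x
    rw [Finset.sum_ite_eq' Finset.univ ((a:G)⁻¹ * x * a)]
    simp only [Finset.mem_univ, if_true]
    by_cases h : (a:G)⁻¹ * x * a = (b:G) * x * (b:G)⁻¹
    · rw [if_pos h, if_pos ((comm_iff _ _ _).mp h)]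
    · rw [if_neg h, if_neg (fun hc => h ((comm_iff (a:G) (b:G) x).mpr hc))]
  rw [Finset.sum_congr rfl fun x _ => h2 x, Finset.sum_boole]

lemma card_ne_zero' : ((Fintype.card G : ℝ)) ≠ 0 := by
  exact_mod_cast Fintype.card_ne_zero

lemma entry_some_none (a : {x : G // x ≠ 1}) :
    (Xm G * (Xm G)ᵀ) (some a) none = 1 := by
  rw [Matrix.mul_apply]
  have h1 : ∀ p : G × G, Xm G (some a) p * (Xm G)ᵀ p none
      = (if p.2 = (a:G)⁻¹ * p.1 * a then (1:ℝ) else 0) * ((Fintype.card G : ℝ))⁻¹ := by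
    rintro ⟨x, y⟩; rfl
  rw [Finset.sum_congr rfl fun p _ => h1 p, ← Finset.sum_mul, Fintype.sum_prod_type]
  rw [Finset.sum_congr rfl fun x (_ : x ∈ Finset.univ) => sum_indicator_eq ((a:G)⁻¹ * x * a)]
  simp [mul_inv_cancel₀ (card_ne_zero' (G := G))]

lemma entry_none_some (b : {x : G // x ≠ 1}) :
    (Xm G * (Xm G)ᵀ) none (some b) = 1 := by
  rw [Matrix.mul_apply]
  have h1 : ∀ p : G × G, Xm G none p * (Xm G)ᵀ p (some b)
      = ((Fintype.card G : ℝ))⁻¹ * (if p.2 = (b:G)⁻¹ * p.1 * b then (1:ℝ) else 0) := by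
    rintro ⟨x, y⟩; rfl
  rw [Finset.sum_congr rfl fun p _ => h1 p, ← Finset.mul_sum, Fintype.sum_prod_type]
  rw [Finset.sum_congr rfl fun x (_ : x ∈ Finset.univ) => sum_indicator_eq ((b:G)⁻¹ * x * b)]
  simp [inv_mul_cancel₀ (card_ne_zero' (G := G))]

lemma entry_none_none :
    (Xm G * (Xm G)ᵀ) (none : Option {x : G // x ≠ 1}) none = 1 := by
  rw [Matrix.mul_apply]
  have h1 : ∀ p : G × G, Xm G none p * (Xm G)ᵀ p none
      = ((Fintype.card G : ℝ))⁻¹ * ((Fintype.card G : ℝ))⁻¹ := fun _ => rfl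
  rw [Finset.sum_congr rfl fun p _ => h1 p, Finset.sum_const]
  simp only [Finset.card_univ, Fintype.card_prod, nsmul_eq_mul, Nat.cast_mul]
  field_simp

variable (G) in
def Km : Matrix {x : G // x ≠ 1} {x : G // x ≠ 1} ℝ :=
  Matrix.of fun a b =>
    ((Finset.univ.filter fun h : G =>
        h ≠ 1 ∧ h * ((a : G) * b) = ((a : G) * b) * h).card : ℝ)

lemma card_split (g : G) :
    ((Finset.univ.filter fun h : G => h ≠ 1 ∧ h * g = g * h).card : ℝ)
      = ((Finset.univ.filter fun h : G => h * g = g * h).card : ℝ) - 1 := by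
  have hmem : (1 : G) ∈ Finset.univ.filter fun h : G => h * g = g * h := by simp
  have hset : (Finset.univ.filter fun h : G => h ≠ 1 ∧ h * g = g * h)
      = (Finset.univ.filter fun h : G => h * g = g * h).erase 1 := by
    ext h
    simp [Finset.mem_erase, and_comm]
  rw [hset, Finset.cast_card_erase_of_mem hmem]

lemma km_eq_schur :
    Km G = (Matrix.of fun a b : {x : G // x ≠ 1} =>
        ((Finset.univ.filter fun h : G =>
          h * ((a : G) * b) = ((a : G) * b) * h).card : ℝ))
      - (Matrix.of fun (_ : {x : G // x ≠ 1}) (_ : (PUnit : Type)) => (1:ℝ))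
        * (Matrix.of fun (_ : (PUnit : Type)) (_ : {x : G // x ≠ 1}) => (1:ℝ)) := by
  ext a b
  simp only [Km, Matrix.sub_apply, Matrix.of_apply, Matrix.mul_apply,
    Finset.univ_unique, Finset.sum_singleton, mul_one]
  rw [card_split]

lemma blocks_eq :
    ((Xm G * (Xm G)ᵀ).submatrix id (Equiv.optionCongr (invC (G := G)))).submatrix
        (Equiv.optionEquivSumPUnit {x : G // x ≠ 1}).symm
        (Equiv.optionEquivSumPUnit {x : G // x ≠ 1}).symm
      = Matrix.fromBlocks
        (Matrix.of fun a b : {x : G // x ≠ 1} =>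
          ((Finset.univ.filter fun h : G =>
            h * ((a : G) * b) = ((a : G) * b) * h).card : ℝ))
        (Matrix.of fun _ _ => (1:ℝ)) (Matrix.of fun _ _ => (1:ℝ)) 1 := by
  ext i j
  rcases i with a | u <;> rcases j with b | u <;>
    simp only [Matrix.submatrix_apply, Equiv.optionEquivSumPUnit_symm_inl,
      Equiv.optionEquivSumPUnit_symm_inr, Equiv.optionCongr_apply, Option.map_some,
      Option.map_none, id_eq, Matrix.fromBlocks_apply₁₁, Matrix.fromBlocks_apply₁₂,
      Matrix.fromBlocks_apply₂₁, Matrix.fromBlocks_apply₂₂]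
  · rw [entry_some_some]; rfl
  · rw [entry_some_none]; rfl
  · rw [entry_none_some]; rfl
  · rw [entry_none_none]; simp [Matrix.one_apply]
lemma det_km (hdet : (Xm G * (Xm G)ᵀ).det ≠ 0) : (Km G).det ≠ 0 := by
  have h1 : (Km G).det = ((Xm G * (Xm G)ᵀ).submatrix id
      (Equiv.optionCongr (invC (G := G)))).det := by
    rw [km_eq_schur, ← Matrix.det_fromBlocks_one₂₂, ← blocks_eq,
      Matrix.det_submatrix_equiv_self]
  rw [h1, Matrix.det_permute']
  apply mul_ne_zero _ hdet
  rcases Int.units_eq_one_or (Equiv.Perm.sign (Equiv.optionCongr (invC (G := G)))) with h | h <;>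
    rw [h] <;> norm_num

lemma detM_ne [Nontrivial G]
    (hk : ∀ c : G → ℂ,
      (∀ x y : G, (∑ a : G, c a * (if y = a⁻¹ * x * a then 1 else 0)) = 0) → ∀ b, c b = 0) :
    (Xm G * (Xm G)ᵀ).det ≠ 0 := by
  intro h0
  obtain ⟨v, hv, hMv⟩ := Matrix.exists_mulVec_eq_zero_iff.mpr h0
  apply hv
  have hw : v ᵥ* (Xm G) = 0 := by
    have h1 : v ⬝ᵥ ((Xm G * (Xm G)ᵀ) *ᵥ v) = 0 := by rw [hMv, dotProduct_zero]
    rw [← Matrix.mulVec_mulVec, Matrix.dotProduct_mulVec, Matrix.mulVec_transpose] at h1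
    exact dotProduct_self_eq_zero.mp h1
  have hw' : ∀ p : G × G, (∑ i : Option {x : G // x ≠ 1}, v i * Xm G i p) = 0 := by
    intro p
    have h2 := congrFun hw p
    simpa [Matrix.vecMul, dotProduct] using h2
  obtain ⟨y₀, hy₀⟩ := exists_ne (1 : G)
  have hnone : v none = 0 := by
    have h2 := hw' (1, y₀)
    rw [Fintype.sum_option] at h2
    have h3 : ∀ a : {x : G // x ≠ 1}, v (some a) * Xm G (some a) (1, y₀) = 0 := by
      intro a
      have h4 : Xm G (some a) (1, y₀) = 0 := by
        simp only [Xm, Matrix.of_apply, Option.elim]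
        rw [if_neg]
        intro hcon
        exact hy₀ (by rw [hcon]; group)
      rw [h4, mul_zero]
    rw [Finset.sum_congr rfl fun a _ => h3 a] at h2
    simp only [Finset.sum_const_zero, add_zero] at h2
    have h5 : Xm G none (1, y₀) = ((Fintype.card G : ℝ))⁻¹ := rfl
    rw [h5] at h2
    rcases mul_eq_zero.mp h2 with h | h
    · exact h
    · exact absurd h (inv_ne_zero (card_ne_zero' (G := G)))
  -- the complex coefficient function
  set c : G → ℂ := fun g => if h : g = 1 then 0 else (v (some ⟨g, h⟩) : ℂ) with hc
  have hI : ∀ x y : G, (∑ a : G, c a * (if y = a⁻¹ * x * a then 1 else 0)) = 0 := by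
    intro x y
    have hreal : (∑ a : {x : G // x ≠ 1},
        v (some a) * (if y = (a : G)⁻¹ * x * a then (1:ℝ) else 0)) = 0 := by
      have h2 := hw' (x, y)
      rw [Fintype.sum_option] at h2
      have h5 : Xm G none (x, y) = ((Fintype.card G : ℝ))⁻¹ := rfl
      rw [h5, hnone, zero_mul, zero_add] at h2
      exact h2
    have hC : (∑ a : {x : G // x ≠ 1},
        (v (some a) : ℂ) * (if y = (a : G)⁻¹ * x * a then (1:ℂ) else 0)) = 0 := by
      have h6 : ((∑ a : {x : G // x ≠ 1},
          v (some a) * (if y = (a : G)⁻¹ * x * a then (1:ℝ) else 0) : ℝ) : ℂ) = 0 := by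
        rw [hreal]; simp
      push_cast [apply_ite Complex.ofReal] at h6
      exact h6
    rw [← Finset.add_sum_erase Finset.univ _ (Finset.mem_univ (1 : G))]
    have hc1 : c 1 = 0 := by rw [hc]; simp
    rw [hc1, zero_mul, zero_add]
    rw [Finset.sum_subtype (p := fun g : G => g ≠ 1) (Finset.univ.erase 1) (by simp)
      fun a : G => c a * (if y = a⁻¹ * x * a then (1:ℂ) else 0)]
    rw [show (∑ a : {g : G // g ≠ 1}, c a * (if y = (a:G)⁻¹ * x * a then (1:ℂ) else 0))
        = ∑ a : {g : G // g ≠ 1}, (v (some a) : ℂ) * (if y = (a:G)⁻¹ * x * a then (1:ℂ) else 0)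
      from Finset.sum_congr rfl fun a _ => by rw [hc]; simp [a.2]]
    exact hC
  have hz := hk c hI
  funext i
  rcases i with _ | a
  · exact hnone
  · have h7 := hz a
    rw [hc] at h7
    simp only [a.2, dif_neg, not_false_iff] at h7
    have h8 : v (some ⟨(a : G), a.2⟩) = v (some a) := by
      congr
    rw [h8] at h7
    exact_mod_cast h7
end

end RothKillingAux

/-- If every complex irreducible representation of `G` occurs in the
conjugation representation (the Roth property), then the Killing form
`K(a,b) = |Z(ab) ∩ (G \\ {e})|` of the universal calculus is nondegenerate. -/
theorem stmt_10 {G : Type} [Group G] [Fintype G] [DecidableEq G]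
    (hRoth : ∀ V : FDRep ℂ G, Simple V → ∃ f : V ⟶ FDRep.of (conjRep G), f ≠ 0) :
    Matrix.det (Matrix.of fun a b : {x : G // x ≠ 1} =>
      ((Finset.univ.filter fun h : G =>
        h ≠ 1 ∧ h * ((a : G) * b) = ((a : G) * b) * h).card : ℂ)) ≠ 0 := by
  rcases subsingleton_or_nontrivial G with hG | hG
  · haveI : IsEmpty {x : G // x ≠ 1} := ⟨fun a => a.2 (Subsingleton.elim _ _)⟩
    rw [Matrix.det_isEmpty]
    exact one_ne_zero
  · have hmap : (Matrix.of fun a b : {x : G // x ≠ 1} =>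
        ((Finset.univ.filter fun h : G =>
          h ≠ 1 ∧ h * ((a : G) * b) = ((a : G) * b) * h).card : ℂ))
        = (RothKillingAux.Km G).map (algebraMap ℝ ℂ) := by
      ext a b
      simp [RothKillingAux.Km, Matrix.map_apply]
    have hdet2 : ((RothKillingAux.Km G).map (algebraMap ℝ ℂ)).det
        = algebraMap ℝ ℂ ((RothKillingAux.Km G).det) := by
      rw [← RingHom.mapMatrix_apply, ← RingHom.map_det]
    rw [hmap, hdet2]
    have hne : (RothKillingAux.Km G).det ≠ 0 :=
      RothKillingAux.det_km (RothKillingAux.detM_ne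
        (fun c hI => RothKillingAux.killing hRoth c hI))
    exact fun h => hne ((algebraMap ℝ ℂ).injective (h.trans (map_zero _).symm))
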